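/- Let π : X → Y be a linear quotient map from a normed space X to a topological space Y, ψ : Y → X a section of π with ψ(ȳ) = x̂, and α ∈ (0,1]. For λ ∈ ℝ⁺, let H_{λψ, λx̂, α} be the set of sections w of (1/λ)π with w(ȳ) = λx̂ that are intrinsically Hölder with respect to λψ at λx̂ (with some constant). Then if φ ∈ H_{δ₁ψ, δ₁x̂, α} and η ∈ H_{δ₂ψ, δ₂x̂, α} for δ₁, δ₂ ∈ ℝ⁺, the sum φ + η belongs to H_{(δ₁+δ₂)ψ, (δ₁+δ₂)x̂, α}. In particular, for φ, η ∈ H_{ψ, x̂, α} with constants L_φ, L_η, the map w = φ + η satisfies ‖w(y) − 2ψ(y)‖ ≤ 2^{1−α}·max{L_φ, L_η}·‖2ψ(ȳ) − 2ψ(y)‖^α + ‖2ψ(ȳ) − 2ψ(y)‖ for all y ∈ Y, so w ∈ H_{2ψ, 2x̂, α}. Together with closure under nonzero scalar multiplication, the union ⋃_{λ∈ℝ⁺} H_{λψ, λx̂, α} ∪ {0} is a vector space over ℝ. -/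
import Mathlib


open Metric Set

/-- Sums of sections that are intrinsically Hölder with respect to `δ₁ψ` at `δ₁x̂` and
`δ₂ψ` at `δ₂x̂` are intrinsically Hölder with respect to `(δ₁+δ₂)ψ` at `(δ₁+δ₂)x̂`; in
particular for `δ₁ = δ₂ = 1` one has the explicit bound with constant
`2^(1-α)·max{L_φ, L_η}`. -/
theorem stmt7 {X Y : Type*} [NormedAddCommGroup X] [NormedSpace ℝ X]
    [AddCommGroup Y] [Module ℝ Y] [TopologicalSpace Y]
    (π : X → Y) (hπlin : IsLinearMap ℝ π)
    (hπc : Continuous π) (hπo : IsOpenMap π) (hπs : Function.Surjective π)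
    (α : ℝ) (hα : α ∈ Set.Ioc (0:ℝ) 1)
    (ψ : Y → X) (hψ : ∀ y, π (ψ y) = y) (ybar : Y) (xhat : X) (hxhat : ψ ybar = xhat)
    (δ₁ δ₂ : ℝ) (hδ₁ : 0 < δ₁) (hδ₂ : 0 < δ₂)
    (φ η : Y → X)
    (hφsec : ∀ y, (1 / δ₁) • π (φ y) = y) (hηsec : ∀ y, (1 / δ₂) • π (η y) = y)
    (hφy : φ ybar = δ₁ • xhat) (hηy : η ybar = δ₂ • xhat)
    (Lφ Lη : ℝ) (hLφ : 0 < Lφ) (hLη : 0 < Lη)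
    (hφ : ∀ y : Y, ‖φ y - δ₁ • ψ y‖ ≤
      Lφ * ‖δ₁ • ψ ybar - δ₁ • ψ y‖ ^ α + ‖δ₁ • ψ ybar - δ₁ • ψ y‖)
    (hη : ∀ y : Y, ‖η y - δ₂ • ψ y‖ ≤
      Lη * ‖δ₂ • ψ ybar - δ₂ • ψ y‖ ^ α + ‖δ₂ • ψ ybar - δ₂ • ψ y‖) :
    (∀ y, (1 / (δ₁ + δ₂)) • π (φ y + η y) = y) ∧
    (φ ybar + η ybar = (δ₁ + δ₂) • xhat) ∧
    (∃ L > 0, ∀ y : Y, ‖(φ y + η y) - (δ₁ + δ₂) • ψ y‖ ≤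
      L * ‖(δ₁ + δ₂) • ψ ybar - (δ₁ + δ₂) • ψ y‖ ^ α
        + ‖(δ₁ + δ₂) • ψ ybar - (δ₁ + δ₂) • ψ y‖) ∧
    (δ₁ = 1 → δ₂ = 1 → ∀ y : Y, ‖(φ y + η y) - (2:ℝ) • ψ y‖ ≤
      2 ^ (1 - α) * max Lφ Lη * ‖(2:ℝ) • ψ ybar - (2:ℝ) • ψ y‖ ^ α
        + ‖(2:ℝ) • ψ ybar - (2:ℝ) • ψ y‖) := by
 
  obtain ⟨hα0, hα1⟩ := hα
  have hδ : 0 < δ₁ + δ₂ := by linarith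
  refine ⟨?_, ?_, ?_, ?_⟩
  · intro y
    have h1 : π (φ y) = δ₁ • y := by
      have h := congrArg (δ₁ • ·) (hφsec y)
      simpa [smul_smul, one_div, mul_inv_cancel₀ hδ₁.ne'] using h
    have h2 : π (η y) = δ₂ • y := by
      have h := congrArg (δ₂ • ·) (hηsec y)
      simpa [smul_smul, one_div, mul_inv_cancel₀ hδ₂.ne'] using h
    rw [hπlin.map_add, h1, h2, ← add_smul, smul_smul, one_div,
      inv_mul_cancel₀ hδ.ne', one_smul]
  · rw [hφy, hηy, ← add_smul]
  · refine ⟨Lφ + Lη, by linarith, fun y => ?_⟩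
    set d : ℝ := ‖ψ ybar - ψ y‖ with hd
    have hdnn : 0 ≤ d := norm_nonneg _
    have n1 : ‖δ₁ • ψ ybar - δ₁ • ψ y‖ = δ₁ * d := by
      rw [← smul_sub, norm_smul, Real.norm_of_nonneg hδ₁.le]
    have n2 : ‖δ₂ • ψ ybar - δ₂ • ψ y‖ = δ₂ * d := by
      rw [← smul_sub, norm_smul, Real.norm_of_nonneg hδ₂.le]
    have n3 : ‖(δ₁ + δ₂) • ψ ybar - (δ₁ + δ₂) • ψ y‖ = (δ₁ + δ₂) * d := by
      rw [← smul_sub, norm_smul, Real.norm_of_nonneg hδ.le]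
    have key : ‖(φ y + η y) - (δ₁ + δ₂) • ψ y‖ ≤
        ‖φ y - δ₁ • ψ y‖ + ‖η y - δ₂ • ψ y‖ := by
      have : (φ y + η y) - (δ₁ + δ₂) • ψ y =
          (φ y - δ₁ • ψ y) + (η y - δ₂ • ψ y) := by rw [add_smul]; abel
      rw [this]; exact norm_add_le _ _
    have b1 := hφ y
    have b2 := hη y
    rw [n1] at b1
    rw [n2] at b2
    rw [n3]
    have r1 : (δ₁ * d) ^ α ≤ ((δ₁ + δ₂) * d) ^ α :=
      Real.rpow_le_rpow (by positivity)
        (mul_le_mul_of_nonneg_right (by linarith) hdnn) hα0.le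
    have r2 : (δ₂ * d) ^ α ≤ ((δ₁ + δ₂) * d) ^ α :=
      Real.rpow_le_rpow (by positivity)
        (mul_le_mul_of_nonneg_right (by linarith) hdnn) hα0.le
    have m1 : Lφ * (δ₁ * d) ^ α ≤ Lφ * ((δ₁ + δ₂) * d) ^ α :=
      mul_le_mul_of_nonneg_left r1 hLφ.le
    have m2 : Lη * (δ₂ * d) ^ α ≤ Lη * ((δ₁ + δ₂) * d) ^ α :=
      mul_le_mul_of_nonneg_left r2 hLη.le
    calc ‖(φ y + η y) - (δ₁ + δ₂) • ψ y‖
        ≤ ‖φ y - δ₁ • ψ y‖ + ‖η y - δ₂ • ψ y‖ := key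
      _ ≤ (Lφ * (δ₁ * d) ^ α + δ₁ * d) + (Lη * (δ₂ * d) ^ α + δ₂ * d) := by
          linarith
      _ ≤ (Lφ + Lη) * ((δ₁ + δ₂) * d) ^ α + (δ₁ + δ₂) * d := by
          nlinarith [m1, m2]
  · intro h1 h2 y
    subst h1; subst h2
    set d : ℝ := ‖ψ ybar - ψ y‖ with hd
    have hdnn : 0 ≤ d := norm_nonneg _
    have n1 : ‖(1:ℝ) • ψ ybar - (1:ℝ) • ψ y‖ = d := by simp [hd]
    have n3 : ‖(2:ℝ) • ψ ybar - (2:ℝ) • ψ y‖ = 2 * d := by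
      rw [← smul_sub, norm_smul]
      norm_num [hd]
    have b1 := hφ y
    have b2 := hη y
    rw [n1] at b1 b2
    rw [n3]
    have key : ‖(φ y + η y) - (2:ℝ) • ψ y‖ ≤
        ‖φ y - (1:ℝ) • ψ y‖ + ‖η y - (1:ℝ) • ψ y‖ := by
      have : (φ y + η y) - (2:ℝ) • ψ y =
          (φ y - (1:ℝ) • ψ y) + (η y - (1:ℝ) • ψ y) := by
        rw [one_smul, two_smul]; abel
      rw [this]; exact norm_add_le _ _
    have hrw : (2 * d) ^ α = (2:ℝ) ^ α * d ^ α :=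
      Real.mul_rpow (by norm_num) hdnn
    have h2a : (2:ℝ) ^ (1 - α) * (2:ℝ) ^ α = 2 := by
      rw [← Real.rpow_add (by norm_num : (0:ℝ) < 2)]
      norm_num
    have hmax : Lφ + Lη ≤ 2 * max Lφ Lη := by
      have := le_max_left Lφ Lη
      have := le_max_right Lφ Lη
      linarith
    have hdα : 0 ≤ d ^ α := Real.rpow_nonneg hdnn α
    calc ‖(φ y + η y) - (2:ℝ) • ψ y‖
        ≤ ‖φ y - (1:ℝ) • ψ y‖ + ‖η y - (1:ℝ) • ψ y‖ := key
      _ ≤ (Lφ * d ^ α + d) + (Lη * d ^ α + d) := by linarith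
      _ ≤ 2 * max Lφ Lη * d ^ α + 2 * d := by nlinarith [hmax, hdα]
      _ = 2 ^ (1 - α) * max Lφ Lη * (2 * d) ^ α + 2 * d := by
          have : 2 ^ (1 - α) * max Lφ Lη * (2 * d) ^ α
              = (2 ^ (1 - α) * 2 ^ α) * (max Lφ Lη * d ^ α) := by rw [hrw]; ring
          rw [this, h2a]; ring
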